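/- arXiv:2211.03722 — 3 statements merged into one kernel-verified Lean document; each statement's English description precedes it below -/
import Mathlib

section
/- Let a ∈ O_L and let (F_m)_{m≥0} be a sequence in Λ that is norm-compatible for a. Then for every m ≥ 1 there exist u, v ∈ Λ such that C_m·C_{m−1}···C_1·(u, v)ᵀ = (F_m, −Φ_m·F_{m−1})ᵀ, the equality holding exactly in Λ² (not merely as a congruence). (This is the exact solvability (3.4) established in the proof of Theorem 3.3 of the paper.) -/
open PowerSeries

/-- `ω_m = (1+X)^{p^m} − 1`. -/
noncomputable def omegaPS (p : ℕ) (R : Type*) [CommRing R] (m : ℕ) : PowerSeries R :=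
  (1 + PowerSeries.X) ^ (p ^ m) - 1

/-- `Φ_m = Σ_{i<p} (1+X)^{i·p^{m−1}}` (meaningful for `m ≥ 1`). -/
noncomputable def PhiPS (p : ℕ) (R : Type*) [CommRing R] (m : ℕ) : PowerSeries R :=
  ∑ i ∈ Finset.range p, (1 + PowerSeries.X) ^ (i * p ^ (m - 1))

/-- The matrix `C_j = ((a, 1), (−Φ_j, 0))`. -/
noncomputable def Cmat (p : ℕ) (R : Type*) [CommRing R] (a : R) (j : ℕ) :
    Matrix (Fin 2) (Fin 2) (PowerSeries R) :=
  !![PowerSeries.C a, 1; -(PhiPS p R j), 0]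

/-- `H_m = C_m · C_{m−1} ⋯ C_1` (with `H_0 = 1`). -/
noncomputable def Hmat (p : ℕ) (R : Type*) [CommRing R] (a : R) :
    ℕ → Matrix (Fin 2) (Fin 2) (PowerSeries R)
  | 0 => 1
  | m + 1 => Cmat p R a (m + 1) * Hmat p R a m

/-- A sequence `(F_m)_{m≥0}` in `Λ` is norm-compatible for `a` if
`F_{m+1} ≡ a·F_m − Φ_m·F_{m−1} (mod ω_m·Λ)` for every `m ≥ 1`. -/
def NormCompat (p : ℕ) (R : Type*) [CommRing R] (a : R) (F : ℕ → PowerSeries R) : Prop :=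
  ∀ m : ℕ, 1 ≤ m →
    omegaPS p R m ∣ (F (m + 1) - (PowerSeries.C a * F m - PhiPS p R m * F (m - 1)))

lemma omega_succ (p : ℕ) (R : Type*) [CommRing R] (m : ℕ) :
    omegaPS p R (m + 1) = PhiPS p R (m + 1) * omegaPS p R m := by
  unfold omegaPS PhiPS
  have h : ∀ i : ℕ, (1 + PowerSeries.X (R := R)) ^ (i * p ^ (m + 1 - 1)) =
      ((1 + PowerSeries.X) ^ (p ^ m)) ^ i := by
    intro i
    rw [Nat.add_sub_cancel, mul_comm, pow_mul]
  simp_rw [h]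
  rw [geom_sum_mul, ← pow_mul, ← pow_succ]

lemma det_Cmat (p : ℕ) (R : Type*) [CommRing R] (a : R) (j : ℕ) :
    (Cmat p R a j).det = PhiPS p R j := by
  simp [Cmat, Matrix.det_fin_two_of]

lemma omega_eq_det (p : ℕ) (R : Type*) [CommRing R] (a : R) (m : ℕ) :
    omegaPS p R m = (Hmat p R a m).det * omegaPS p R 0 := by
  induction m with
  | zero => simp [Hmat]
  | succ n ih => rw [omega_succ, Hmat, Matrix.det_mul, det_Cmat, ih]; ring

lemma solve_omega (p : ℕ) (R : Type*) [CommRing R] (a : R) (m : ℕ) :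
    ∃ x y : PowerSeries R, (Hmat p R a m).mulVec ![x, y] = ![0, omegaPS p R m] := by
  set w := (Hmat p R a m).adjugate.mulVec ![0, omegaPS p R 0] with hwdef
  refine ⟨w 0, w 1, ?_⟩
  have hw : ![w 0, w 1] = w := by
    funext i; fin_cases i <;> rfl
  rw [hw, hwdef, Matrix.mulVec_mulVec, Matrix.mul_adjugate, Matrix.smul_mulVec,
    Matrix.one_mulVec]
  funext i
  fin_cases i <;> simp [omega_eq_det p R a m, mul_comm]

/-- if `(F_m)` is norm-compatible for `a`, then for every `m ≥ 1` there
exist `u, v ∈ Λ` with `C_m·C_{m−1}⋯C_1·(u,v)ᵀ = (F_m, −Φ_m·F_{m−1})ᵀ`, exactly in `Λ²`. -/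
theorem exact_solvability
    (p : ℕ) (hp : p.Prime) (hp5 : 5 ≤ p)
    (𝕆 : Type*) [CommRing 𝕆] [IsDomain 𝕆] [IsDiscreteValuationRing 𝕆] [CharZero 𝕆]
    (ϖ : 𝕆) (hϖ : Irreducible ϖ) (hpϖ : ϖ ∣ (p : 𝕆))
    (a : 𝕆) (F : ℕ → PowerSeries 𝕆) (hF : NormCompat p 𝕆 a F) :
    ∀ m : ℕ, 1 ≤ m → ∃ u v : PowerSeries 𝕆,
      (Hmat p 𝕆 a m).mulVec ![u, v] = ![F m, -(PhiPS p 𝕆 m * F (m - 1))] := by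
  intro m hm
  induction m, hm using Nat.le_induction with
  | base =>
    refine ⟨F 0, F 1 - PowerSeries.C a * F 0, ?_⟩
    funext i
    fin_cases i <;>
      simp [Hmat, Cmat, Matrix.mulVec, dotProduct, Fin.sum_univ_two] <;> ring
  | succ n hn ih =>
    obtain ⟨u, v, huv⟩ := ih
    obtain ⟨g, hg⟩ := hF n hn
    obtain ⟨x, y, hxy⟩ := solve_omega p 𝕆 a n
    refine ⟨u + g * x, v + g * y, ?_⟩
    have hvec : (![u + g * x, v + g * y] : Fin 2 → PowerSeries 𝕆)
        = ![u, v] + g • ![x, y] := by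
      funext i; fin_cases i <;> simp [smul_eq_mul]
    have h1 : (Hmat p 𝕆 a n).mulVec ![u + g * x, v + g * y]
        = ![F n, F (n + 1) - PowerSeries.C a * F n] := by
      rw [hvec, Matrix.mulVec_add, Matrix.mulVec_smul, huv, hxy]
      funext i
      fin_cases i
      · simp
      · show -(PhiPS p 𝕆 n * F (n - 1)) + g • omegaPS p 𝕆 n
            = F (n + 1) - PowerSeries.C a * F n
        rw [smul_eq_mul]
        linear_combination -hg
    have h2 : Hmat p 𝕆 a (n + 1) = Cmat p 𝕆 a (n + 1) * Hmat p 𝕆 a n := rfl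
    rw [h2, ← Matrix.mulVec_mulVec, h1]
    funext i
    fin_cases i <;>
      simp [Cmat, Matrix.mulVec, dotProduct, Fin.sum_univ_two] <;> ring
end

section
/- (Computation from the proof of Proposition 4.9 of the paper, over Λ.) Let a ∈ O_L with ϖ ∣ a, let (F_m)_{m≥0} be a sequence in Λ that is norm-compatible for a, and let (F^♯, F^♭) ∈ Λ × Λ be the unique pair with H_m·(F^♯, F^♭)ᵀ ≡ (F_m, −Φ_m·F_{m−1})ᵀ (mod ω_m·Λ) for all m ≥ 1 (Theorem 3.3). Then F^♯ ≡ F_0 (mod X·Λ) and F^♭ ≡ F_1 − a·F_0 (mod X·Λ); equivalently, F^♯(0) = F_0(0) and F^♭(0) = F_1(0) − a·F_0(0) in O_L. -/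
open PowerSeries

/-- from the proof of Proposition 4.9 of the paper: if `ϖ ∣ a`,
`(F_m)` is norm-compatible for `a`, and `(F^♯, F^♭)` is the pair attached by
Theorem 3.3 (i.e. `H_m·(F^♯,F^♭)ᵀ ≡ (F_m, −Φ_m·F_{m−1})ᵀ (mod ω_m·Λ)` for all
`m ≥ 1`), then `F^♯ ≡ F_0 (mod X·Λ)` and `F^♭ ≡ F_1 − a·F_0 (mod X·Λ)`;
equivalently `F^♯(0) = F_0(0)` and `F^♭(0) = F_1(0) − a·F_0(0)` in `𝕆`. -/
theorem sharp_flat_evaluation_at_zero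
    (p : ℕ) (hp : p.Prime) (hp5 : 5 ≤ p)
    (𝕆 : Type*) [CommRing 𝕆] [IsDomain 𝕆] [IsDiscreteValuationRing 𝕆] [CharZero 𝕆]
    (ϖ : 𝕆) (hϖ : Irreducible ϖ) (hpϖ : ϖ ∣ (p : 𝕆))
    (a : 𝕆) (ha : ϖ ∣ a) (F : ℕ → PowerSeries 𝕆) (hF : NormCompat p 𝕆 a F)
    (Fs Fb : PowerSeries 𝕆)
    (hsharp : ∀ m : ℕ, 1 ≤ m → ∀ i : Fin 2,
      omegaPS p 𝕆 m ∣
        ((Hmat p 𝕆 a m).mulVec ![Fs, Fb] i - ![F m, -(PhiPS p 𝕆 m * F (m - 1))] i)) :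
    ((PowerSeries.X : PowerSeries 𝕆) ∣ (Fs - F 0) ∧
      (PowerSeries.X : PowerSeries 𝕆) ∣ (Fb - (F 1 - PowerSeries.C a * F 0))) ∧
    (PowerSeries.constantCoeff Fs = PowerSeries.constantCoeff (F 0) ∧
      PowerSeries.constantCoeff Fb =
        PowerSeries.constantCoeff (F 1) - a * PowerSeries.constantCoeff (F 0)) := by
  have hω : omegaPS p 𝕆 1 = PhiPS p 𝕆 1 * PowerSeries.X := by
    have h := geom_sum_mul (1 + PowerSeries.X : PowerSeries 𝕆) p
    simp only [add_sub_cancel_left] at h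
    simp [omegaPS, PhiPS, pow_one, ← h]
  have hΦne : (PhiPS p 𝕆 1) ≠ 0 := by
    have hΦ0 : PowerSeries.constantCoeff (PhiPS p 𝕆 1) = p := by
      simp [PhiPS, map_sum]
    intro h
    rw [h, map_zero] at hΦ0
    exact hp.ne_zero (by exact_mod_cast hΦ0.symm)
  have h1 := hsharp 1 le_rfl 1
  have h0 := hsharp 1 le_rfl 0
  have hH : Hmat p 𝕆 a 1 = Cmat p 𝕆 a 1 := by simp [Hmat]
  rw [hH] at h1 h0
  simp only [Cmat, Matrix.mulVec, dotProduct, Fin.sum_univ_two,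
    Matrix.cons_val', Matrix.cons_val_zero, Matrix.cons_val_one, Matrix.head_cons,
    Matrix.empty_val', Matrix.cons_val_fin_one, Matrix.head_fin_const, Matrix.of_apply,
    one_mul, zero_mul, neg_mul, add_zero] at h1 h0
  have hd1 : (PowerSeries.X : PowerSeries 𝕆) ∣ (Fs - F 0) := by
    have h2 : PhiPS p 𝕆 1 * PowerSeries.X ∣ PhiPS p 𝕆 1 * (Fs - F 0) := by
      rw [← hω]
      have := h1.neg_right
      convert this using 1
      ring
    exact (mul_dvd_mul_iff_left hΦne).mp h2
  have hXω : (PowerSeries.X : PowerSeries 𝕆) ∣ omegaPS p 𝕆 1 := hω ▸ dvd_mul_left _ _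
  have hd2 : (PowerSeries.X : PowerSeries 𝕆) ∣ (Fb - (F 1 - PowerSeries.C a * F 0)) := by
    have h3 : (PowerSeries.X : PowerSeries 𝕆) ∣
        (PowerSeries.C a * Fs + Fb - F 1) := hXω.trans h0
    have h4 := hd1.mul_left (PowerSeries.C a)
    have := h3.sub h4
    convert this using 1
    ring
  refine ⟨⟨hd1, hd2⟩, ?_, ?_⟩
  · have := (PowerSeries.X_dvd_iff.mp hd1)
    rw [map_sub] at this
    linear_combination this
  · have := (PowerSeries.X_dvd_iff.mp hd2)
    simp only [map_sub, map_mul, PowerSeries.constantCoeff_C] at this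
    linear_combination this
end

section
/- (The p-stabilization compatibility asserted in §3.3 of the paper.) Let a ∈ O_L, let E be a field extension of L, and let λ ∈ E be a root of x² − a·x + p (note λ ≠ 0 since p ≠ 0). Let (F_m)_{m≥0} be a sequence in Λ that is norm-compatible for a, and for m ≥ 1 define the λ-stabilization F_m^λ := λ^{−(m+1)}·(F_m − λ^{−1}·Φ_m·F_{m−1}) ∈ E[[X]]. Then F_{m+1}^λ ≡ F_m^λ (mod ω_m·E[[X]]) for every m ≥ 1. -/
/-!
Setting: `p ≥ 5` a prime, `𝕆` the ring of integers of a finite extension `L` of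
`ℚ_p` (modelled as a characteristic-zero discrete valuation ring) with uniformizer
`ϖ` satisfying `ϖ ∣ p`, `Λ = 𝕆⟦X⟧`, and `E` a field extension of `L` (modelled as a
field equipped with an injective algebra map from `𝕆`).
-/

open PowerSeries

/-- The `λ`-stabilization `F_m^λ = λ^{−(m+1)}·(F_m − λ^{−1}·Φ_m·F_{m−1}) ∈ E⟦X⟧`
(for `m ≥ 1`). -/
noncomputable def lambdaStab (p : ℕ) (𝕆 E : Type*) [CommRing 𝕆] [Field E] [Algebra 𝕆 E]
    (lam : E) (F : ℕ → PowerSeries 𝕆) (m : ℕ) : PowerSeries E :=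
  PowerSeries.C (lam⁻¹ ^ (m + 1)) *
    ((F m).map (algebraMap 𝕆 E) -
      PowerSeries.C lam⁻¹ * (PhiPS p E m * (F (m - 1)).map (algebraMap 𝕆 E)))

/-- Mapping `ω_m` along a ring hom. -/
lemma omegaPS_map {R S : Type*} [CommRing R] [CommRing S] (f : R →+* S) (p m : ℕ) :
    PowerSeries.map f (omegaPS p R m) = omegaPS p S m := by
  simp [omegaPS]

/-- Mapping `Φ_m` along a ring hom. -/
lemma PhiPS_map {R S : Type*} [CommRing R] [CommRing S] (f : R →+* S) (p m : ℕ) :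
    PowerSeries.map f (PhiPS p R m) = PhiPS p S m := by
  simp [PhiPS]

/-- the `p`-stabilization compatibility asserted in §3.3 of the
paper: if `λ ∈ E` is a root of `x² − a·x + p` and `(F_m)` is norm-compatible for
`a`, then `F_{m+1}^λ ≡ F_m^λ (mod ω_m·E⟦X⟧)` for every `m ≥ 1`. -/
theorem lambda_stabilization_compatible
    (p : ℕ) (hp : p.Prime) (hp5 : 5 ≤ p)
    (𝕆 : Type*) [CommRing 𝕆] [IsDomain 𝕆] [IsDiscreteValuationRing 𝕆] [CharZero 𝕆]
    (ϖ : 𝕆) (hϖ : Irreducible ϖ) (hpϖ : ϖ ∣ (p : 𝕆))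
    (E : Type*) [Field E] [Algebra 𝕆 E]
    (hinj : Function.Injective (algebraMap 𝕆 E))
    (a : 𝕆) (lam : E)
    (hlam : lam ^ 2 - algebraMap 𝕆 E a * lam + (p : E) = 0)
    (F : ℕ → PowerSeries 𝕆) (hF : NormCompat p 𝕆 a F) :
    ∀ m : ℕ, 1 ≤ m →
      omegaPS p E m ∣ (lambdaStab p 𝕆 E lam F (m + 1) - lambdaStab p 𝕆 E lam F m) := by
  -- λ ≠ 0
  have hpE : ((p : ℕ) : E) ≠ 0 := by
    have : ((p : ℕ) : E) = algebraMap 𝕆 E ((p : ℕ) : 𝕆) := by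
      simp
    rw [this]
    intro h
    have h0 : ((p : ℕ) : 𝕆) = 0 := hinj (by simpa using h)
    exact (Nat.cast_ne_zero.mpr hp.pos.ne') h0
  have hlam0 : lam ≠ 0 := by
    intro h
    rw [h] at hlam
    simp at hlam
    exact hpE (by simpa using hlam)
  -- the key scalar relation: a = λ + p·λ⁻¹
  have ha : algebraMap 𝕆 E a = lam + ((p : ℕ) : E) * lam⁻¹ := by
    field_simp
    linear_combination -hlam
  have hinv : lam * lam⁻¹ = 1 := mul_inv_cancel₀ hlam0
  intro m hm
  -- map the norm relation to E
  obtain ⟨G, hG⟩ := hF m hm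
  have hG' : (F (m + 1)).map (algebraMap 𝕆 E) =
      PowerSeries.C (algebraMap 𝕆 E a) * (F m).map (algebraMap 𝕆 E)
        - PhiPS p E m * (F (m - 1)).map (algebraMap 𝕆 E)
        + omegaPS p E m * PowerSeries.map (algebraMap 𝕆 E) G := by
    have := congrArg (PowerSeries.map (algebraMap 𝕆 E)) hG
    simp only [map_sub, map_mul, map_add, PowerSeries.map_C, omegaPS_map, PhiPS_map] at this
    linear_combination this
  -- Φ_{m+1} ≡ p (mod ω_m)
  have hPhi1 : omegaPS p E m ∣ PhiPS p E (m + 1) - PowerSeries.C ((p : ℕ) : E) := by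
    have h1 : (PowerSeries.C ((p : ℕ) : E)) = ∑ _i ∈ Finset.range p, (1 : PowerSeries E) := by
      simp
    rw [PhiPS, h1, Nat.add_sub_cancel, ← Finset.sum_sub_distrib]
    refine Finset.dvd_sum fun i _ => ?_
    rw [omegaPS]
    have h2 : (1 + X : PowerSeries E) ^ (i * p ^ m) = ((1 + X) ^ (p ^ m)) ^ i := by
      rw [mul_comm, pow_mul]
    rw [h2]
    simpa using sub_dvd_pow_sub_pow ((1 + X : PowerSeries E) ^ (p ^ m)) 1 i
  obtain ⟨H, hH⟩ := hPhi1
  have hH' : PhiPS p E (m + 1) = PowerSeries.C ((p : ℕ) : E) + omegaPS p E m * H := by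
    linear_combination hH
  -- lift scalar identities to power series
  have hCa : PowerSeries.C (algebraMap 𝕆 E a)
      = PowerSeries.C lam + PowerSeries.C ((p : ℕ) : E) * PowerSeries.C lam⁻¹ := by
    rw [ha]; simp
  have hCinv : PowerSeries.C lam * PowerSeries.C lam⁻¹ = 1 := by
    rw [← map_mul, hinv]; simp
  -- unfold and finish by explicit witness
  refine ⟨PowerSeries.C lam⁻¹ ^ (m + 2) *
    (PowerSeries.map (algebraMap 𝕆 E) G
      - PowerSeries.C lam⁻¹ * (H * (F m).map (algebraMap 𝕆 E))), ?_⟩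
  simp only [lambdaStab, Nat.add_sub_cancel, map_pow]
  rw [hG', hH', hCa]
  ring_nf
  linear_combination (PowerSeries.C lam⁻¹ ^ (m + 1) * (F m).map (algebraMap 𝕆 E)) * hCinv
end
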